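/- With the notation and hypotheses (i), (ii), (iv) of the context, assume moreover that dim W ≥ 1. Then for all X, Y ∈ W, the orthogonal projection of σ(X,Y) onto ℋ = span{H α} equals −⟨X,Y⟩ · Σ_α ((n_α + 1)/r) · H α. -/

import Mathlib

open scoped RealInnerProductSpace

/-- Under Naitoh's structure equations, for `X, Y` in the orthogonal complement
`W = ℋ^⊥` of `ℋ = span{H α}`, the orthogonal projection of `σ(X, Y)` onto `ℋ`
equals `-⟪X, Y⟫ • ∑_α ((n_α + 1)/r) • H α`, where `r = dim W + 1`. -/
theorem proj_span_sigma_eq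
    {E : Type*} [NormedAddCommGroup E] [InnerProductSpace ℝ E]
    [FiniteDimensional ℝ E]
    (s : ℕ) (hs : 1 ≤ s) (L₁ : ℝ) (hL : L₁ < 0)
    (nn : Fin s → ℕ) (hnn : ∀ α, 0 < nn α)
    (H : Fin s → E) (hind : LinearIndependent ℝ H)
    (hHL : ∀ α β, α ≠ β → ⟪H α, H β⟫ = L₁)
    (σ : E →ₗ[ℝ] E →ₗ[ℝ] E)
    (hsymm : ∀ X Y : E, σ X Y = σ Y X)
    (htri : ∀ X Y Z : E, ⟪σ X Y, Z⟫ = ⟪σ X Z, Y⟫)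
    (hii : ∀ (X : E) (α : Fin s), σ X (H α) = ⟪X, H α⟫ • H α + L₁ • X)
    (b : OrthonormalBasis (Fin (Module.finrank ℝ E)) ℝ E)
    (hiv : ∑ i, σ (b i) (b i) = -∑ α, (nn α : ℝ) • H α)
    (hW : 1 ≤ Module.finrank ℝ ((Submodule.span ℝ (Set.range H))ᗮ)) :
    ∀ X Y : E, X ∈ (Submodule.span ℝ (Set.range H))ᗮ →
      Y ∈ (Submodule.span ℝ (Set.range H))ᗮ →
      (Submodule.orthogonalProjection (Submodule.span ℝ (Set.range H)) (σ X Y) : E) =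
        (-⟪X, Y⟫) • ∑ α, (((nn α : ℝ) + 1) /
          ((Module.finrank ℝ ((Submodule.span ℝ (Set.range H))ᗮ) : ℝ) + 1)) • H α := by
  intro X Y hX hY
  set K : Submodule ℝ E := Submodule.span ℝ (Set.range H) with hKdef
  have hmem : ∀ α, H α ∈ K := fun α => Submodule.subset_span ⟨α, rfl⟩
  set d : ℕ := Module.finrank ℝ Kᗮ with hd
  set r : ℝ := (d : ℝ) + 1 with hrdef
  have hr : r ≠ 0 := by positivity
  set S : ℝ := ∑ α, (nn α : ℝ) with hSdef
  -- dimension count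
  have hdimK : Module.finrank ℝ K = s := by
    simpa using finrank_span_eq_card hind
  have hNE : (Module.finrank ℝ E : ℝ) = (s : ℝ) + d := by
    have := Submodule.finrank_add_finrank_orthogonal (K := K)
    rw [hdimK] at this
    exact_mod_cast this.symm
  -- step 1 : inner products of σ X Y with H β
  have key1 : ∀ β, ⟪σ X Y, H β⟫ = L₁ * ⟪X, Y⟫ := by
    intro β
    have hXH : ⟪X, H β⟫ = 0 := by
      rw [real_inner_comm]
      exact (Submodule.mem_orthogonal K X).mp hX (H β) (hmem β)
    rw [htri, hii]
    rw [inner_add_left, real_inner_smul_left, real_inner_smul_left, hXH]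
    ring
  -- step 2 : norms of H β
  have key2 : ∀ β, ⟪H β, H β⟫ = -L₁ * ((s : ℝ) + d + S - nn β) / (1 + nn β) := by
    intro β
    have hnb : (1 : ℝ) + nn β ≠ 0 := by positivity
    have htrace : ⟪∑ i, σ (b i) (b i), H β⟫ = ⟪-∑ α, (nn α : ℝ) • H α, H β⟫ := by
      rw [hiv]
    have hLHS : ⟪∑ i, σ (b i) (b i), H β⟫
        = ⟪H β, H β⟫ + (Module.finrank ℝ E : ℝ) * L₁ := by
      rw [sum_inner]
      have hterm : ∀ i, ⟪σ (b i) (b i), H β⟫ = ⟪H β, b i⟫ * ⟪b i, H β⟫ + L₁ := by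
        intro i
        rw [htri, hii, inner_add_left, real_inner_smul_left, real_inner_smul_left,
          real_inner_self_eq_norm_sq, b.orthonormal.1 i]
        rw [real_inner_comm (b i) (H β)]
        ring
      rw [Finset.sum_congr rfl fun i _ => hterm i, Finset.sum_add_distrib,
        b.sum_inner_mul_inner]
      simp [mul_comm]
    have hRHS : ⟪-∑ α, (nn α : ℝ) • H α, H β⟫
        = -((nn β : ℝ) * ⟪H β, H β⟫ + (S - nn β) * L₁) := by
      rw [inner_neg_left, sum_inner]
      have : ∀ α ∈ Finset.univ, ⟪(nn α : ℝ) • H α, H β⟫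
          = (nn α : ℝ) • ⟪H α, H β⟫ := by
        intro α _; rw [real_inner_smul_left]; rfl
      rw [Finset.sum_congr rfl this]
      rw [← Finset.sum_erase_add _ _ (Finset.mem_univ β)]
      have he : ∀ α ∈ Finset.univ.erase β, (nn α : ℝ) • ⟪H α, H β⟫
          = (nn α : ℝ) * L₁ := by
        intro α hα
        rw [hHL α β (Finset.ne_of_mem_erase hα)]; rfl
      rw [Finset.sum_congr rfl he, ← Finset.sum_mul]
      have hsum : ∑ α ∈ Finset.univ.erase β, (nn α : ℝ) = S - nn β := by
        have := Finset.sum_erase_add Finset.univ (fun α => (nn α : ℝ)) (Finset.mem_univ β)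
        linarith [this]
      rw [hsum]
      simp only [smul_eq_mul]
      ring
    rw [hLHS, hRHS] at htrace
    rw [hNE] at htrace
    field_simp
    nlinarith [htrace]
  -- step 3 : inner products of the target vector with H β
  set u : E := (-⟪X, Y⟫) • ∑ α, (((nn α : ℝ) + 1) / r) • H α with hu
  have key3 : ∀ β, ⟪u, H β⟫ = L₁ * ⟪X, Y⟫ := by
    intro β
    have hnb : (1 : ℝ) + nn β ≠ 0 := by positivity
    have hsum : ∑ α, (((nn α : ℝ) + 1) / r) * ⟪H α, H β⟫ = -L₁ := by
      rw [← Finset.sum_erase_add _ _ (Finset.mem_univ β)]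
      have he : ∀ α ∈ Finset.univ.erase β,
          (((nn α : ℝ) + 1) / r) * ⟪H α, H β⟫ = (((nn α : ℝ) + 1) / r) * L₁ := by
        intro α hα; rw [hHL α β (Finset.ne_of_mem_erase hα)]
      rw [Finset.sum_congr rfl he, key2 β]
      have hsum2 : ∑ α ∈ Finset.univ.erase β, (((nn α : ℝ) + 1) / r)
          = (S + s - (nn β + 1)) / r := by
        have h1 := Finset.sum_erase_add Finset.univ
          (fun α => ((nn α : ℝ) + 1) / r) (Finset.mem_univ β)
        have h2 : ∑ α, (((nn α : ℝ) + 1) / r) = (S + s) / r := by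
          rw [← Finset.sum_div, Finset.sum_add_distrib]
          simp [hSdef]
        rw [h2] at h1
        field_simp at h1 ⊢
        linarith
      rw [← Finset.sum_mul, hsum2]
      field_simp
      ring
    rw [hu, real_inner_smul_left, sum_inner]
    have : ∀ α ∈ Finset.univ, ⟪(((nn α : ℝ) + 1) / r) • H α, H β⟫
        = (((nn α : ℝ) + 1) / r) * ⟪H α, H β⟫ := by
      intro α _; rw [real_inner_smul_left]
    rw [Finset.sum_congr rfl this, hsum]
    ring
  -- conclude
  have hu_mem : u ∈ K := by
    refine Submodule.smul_mem _ _ (Submodule.sum_mem _ fun α _ => ?_)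
    exact Submodule.smul_mem _ _ (hmem α)
  set P : E := (Submodule.orthogonalProjection K (σ X Y) : E) with hP
  have hP_mem : P ∈ K := (Submodule.orthogonalProjection K (σ X Y)).2
  have hdiff : P - u ∈ Kᗮ := by
    rw [Submodule.mem_orthogonal]
    intro v hv
    rw [real_inner_comm]
    induction hv using Submodule.span_induction with
    | mem x hx =>
      obtain ⟨β, rfl⟩ := hx
      have hPH : ⟪P, H β⟫ = ⟪σ X Y, H β⟫ := by
        have := Submodule.starProjection_inner_eq_zero (K := K) (σ X Y) (H β) (hmem β)
        rw [inner_sub_left, Submodule.starProjection_apply] at this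
        linarith
      rw [inner_sub_left, hPH, key1 β, key3 β]
      ring
    | zero => simp
    | add x y _ _ hx hy => rw [inner_add_right, hx, hy]; ring
    | smul c x _ hx => rw [real_inner_smul_right, hx]; ring
  have hdiff' : P - u ∈ K := Submodule.sub_mem _ hP_mem hu_mem
  have : P - u = 0 := by
    have := Submodule.inner_right_of_mem_orthogonal hdiff' hdiff
    exact inner_self_eq_zero.mp this
  have := sub_eq_zero.mp this
  simpa [hP, hu] using this
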